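/- arXiv:math/0608036 — 2 statements merged into one kernel-verified Lean document; each statement's English description precedes it below -/
import Mathlib

section
/- If the RWRE (X_n) is recurrent, then there exists a constant c₁₀ > 0 such that for every n ≥ 1, ϱ_n ≥ (c₁₀/n) · exp(−min_{x∈𝕋_n} V̄(x)). -/
open MeasureTheory ProbabilityTheory Filter
open scoped ENNReal NNReal

noncomputable section

namespace RWRE

/-- Vertices of the rooted `b`-ary tree `𝕋`: a vertex is a (finite) list of child
indices; the root `e` is `[]`, the children of `x` are the `i :: x` for `i : Fin b`,
the parent `x⃖` of a vertex `x ≠ ([] : Vertex b)` is `x.tail`, and the generation `|x|` is `x.length`. -/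
abbrev Vertex (b : ℕ) := List (Fin b)

instance (b : ℕ) : MeasurableSpace (Vertex b) := ⊤

/-- `x` and `y` are neighbours in the tree. -/
def adj {b : ℕ} (x y : Vertex b) : Prop :=
  (∃ i : Fin b, y = i :: x) ∨ (∃ i : Fin b, x = i :: y)

/-- The setting of Hu–Shi, "Slow movement of random walk in random environment on a
regular tree".  Under a probability `P` on `Ω` we are given:

* a random environment `env ω` on the `b`-ary tree: nonnegative, supported on
  neighbouring pairs, summing to `1` at each vertex, elliptic (`≥ ε0` on edges), with
  the vectors `(env · x ·)` for `x ≠ e` i.i.d. and non-degenerate (common law `μenv`);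
* the variables `A ω x = env ω x⃖ x / env ω x⃖ x⃖⃖` for `|x| ≥ 2`, extended to `|x| = 1`
  by an independent copy, so that all `A ω x` (for `x ≠ e`) have the common law `μA`
  and the vectors `(A ω (i :: x))ᵢ`, indexed by `x`, are i.i.d. with common law `μvec`;
* for each `ω` and each starting vertex `x0`, the quenched law `Pw ω x0` of the Markov
  chain on the tree with transition probabilities `env ω`, as a probability measure on
  the path space `ℕ → Vertex b`, characterised by its cylinder probabilities. -/
structure Setup (b : ℕ) (Ω : Type*) [MeasurableSpace Ω] (P : Measure Ω) where
  env : Ω → Vertex b → Vertex b → ℝ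
  A : Ω → Vertex b → ℝ
  μA : Measure ℝ
  μenv : Measure (ℝ × (Fin b → ℝ))
  μvec : Measure (Fin b → ℝ)
  Pw : Ω → Vertex b → Measure (ℕ → Vertex b)
  ε0 : ℝ
  ε0_pos : 0 < ε0
  env_nonneg : ∀ ω x y, 0 ≤ env ω x y
  env_zero : ∀ ω x y, ¬ adj x y → env ω x y = 0
  env_elliptic : ∀ ω x y, adj x y → ε0 ≤ env ω x y
  env_sum_root : ∀ ω, (∑ i : Fin b, env ω ([] : Vertex b) ([i])) = 1
  env_sum : ∀ ω (x : Vertex b), x ≠ ([] : Vertex b) →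
      env ω x x.tail + (∑ i : Fin b, env ω x (i :: x)) = 1
  env_meas : ∀ x y, Measurable fun ω => env ω x y
  env_law : ∀ x : Vertex b, x ≠ ([] : Vertex b) →
      Measure.map (fun ω => (env ω x x.tail, fun i : Fin b => env ω x (i :: x))) P = μenv
  env_indep : iIndepFun
      (m := fun _ : {x : Vertex b // x ≠ ([] : Vertex b)} => (inferInstance : MeasurableSpace (ℝ × (Fin b → ℝ))))
      (fun x ω => (env ω x.1 x.1.tail, fun i : Fin b => env ω x.1 (i :: x.1))) P
  env_nondeg : ∀ v : ℝ × (Fin b → ℝ), μenv ≠ Measure.dirac v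
  A_meas : ∀ x, Measurable fun ω => A ω x
  A_def : ∀ ω (i : Fin b) (z : Vertex b), z ≠ [] →
      A ω (i :: z) = env ω z (i :: z) / env ω z z.tail
  A_bdd : ∀ ω (x : Vertex b), x ≠ ([] : Vertex b) → A ω x ∈ Set.Icc ε0 (1 / ε0)
  A_law : ∀ x : Vertex b, x ≠ ([] : Vertex b) → Measure.map (fun ω => A ω x) P = μA
  A_nondeg : ∀ c : ℝ, μA ≠ Measure.dirac c
  Avec_law : ∀ x : Vertex b, Measure.map (fun ω (i : Fin b) => A ω (i :: x)) P = μvec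
  Avec_indep : iIndepFun (m := fun _ : Vertex b => (inferInstance : MeasurableSpace (Fin b → ℝ)))
      (fun (x : Vertex b) (ω : Ω) (i : Fin b) => A ω (i :: x)) P
  Pw_prob : ∀ ω x, IsProbabilityMeasure (Pw ω x)
  Pw_meas : ∀ x, Measurable fun ω => Pw ω x
  Pw_cyl : ∀ ω (x0 : Vertex b) (n : ℕ) (x : ℕ → Vertex b),
      Pw ω x0 {f | ∀ k ≤ n, f k = x k}
        = ENNReal.ofReal ((if x 0 = x0 then (1 : ℝ) else 0)
            * ∏ k ∈ Finset.range n, env ω (x k) (x (k + 1)))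

variable {b : ℕ} {Ω : Type*} [MeasurableSpace Ω] {P : Measure Ω}

/-- `ψ(t) = log 𝐄(A^t)`. -/
def Setup.psi (S : Setup b Ω P) (t : ℝ) : ℝ := Real.log (∫ a, a ^ t ∂S.μA)

/-- `p = inf_{t ∈ [0,1]} 𝐄(A^t)`. -/
def Setup.pcrit (S : Setup b Ω P) : ℝ := ⨅ t : Set.Icc (0 : ℝ) 1, ∫ a, a ^ (t : ℝ) ∂S.μA

/-- The branching random walk `V`: `V(e) = 0` and `V(x) = -∑_{z ∈ ]]e,x]]} log A(z)`,
the vertices of `]]e,x]]` being `x.drop k` for `k < x.length`. -/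
def Setup.V (S : Setup b Ω P) (ω : Ω) (x : Vertex b) : ℝ :=
  - ∑ k ∈ Finset.range x.length, Real.log (S.A ω (x.drop k))

/-- `V̄(x) = max_{z ∈ ]]e,x]]} V(z)`. -/
def Setup.Vbar (S : Setup b Ω P) (ω : Ω) (x : Vertex b) : ℝ :=
  ⨆ k : Fin x.length, S.V ω (x.drop (k : ℕ))

/-- `min_{x ∈ 𝕋_n} V̄(x)` (every vertex of generation `n` is `List.ofFn g` for a
unique `g : Fin n → Fin b`). -/
def Setup.minVbar (S : Setup b Ω P) (ω : Ω) (n : ℕ) : ℝ :=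
  ⨅ g : Fin n → Fin b, S.Vbar ω (List.ofFn g)

/-- `B(x) = ∏_{y ∈ ]]e,x]]} A(y)`. -/
def Setup.B (S : Setup b Ω P) (ω : Ω) (x : Vertex b) : ℝ :=
  ∏ k ∈ Finset.range x.length, S.A ω (x.drop k)

/-- The additive martingale `M_n = ∑_{x ∈ 𝕋_n} B(x)`. -/
def Setup.M (S : Setup b Ω P) (ω : Ω) (n : ℕ) : ℝ :=
  ∑ g : Fin n → Fin b, S.B ω (List.ofFn g)

/-- The event `{τ_n < τ_0}`: the walk makes an excursion (away from the root) reaching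
level `n` before returning to the root. -/
def rhoEvent (b n : ℕ) : Set (ℕ → Vertex b) :=
  {f | ∃ i : ℕ, 1 ≤ i ∧ (f i).length = n ∧ ∀ j : ℕ, 1 ≤ j → j ≤ i → f j ≠ []}

/-- `ϱ_n = P_ω{τ_n < τ_0}`, for the walk started at the root. -/
def Setup.rho (S : Setup b Ω P) (ω : Ω) (n : ℕ) : ℝ :=
  (S.Pw ω ([] : Vertex b) (rhoEvent b n)).toReal

/-- The event `{τ_n ≤ m}`: the walk reaches level `n` within `m` steps. -/
def hitEvent (b n m : ℕ) : Set (ℕ → Vertex b) :=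
  {f | ∃ i : ℕ, 1 ≤ i ∧ i ≤ m ∧ (f i).length = n}

/-- `τ_n`, as an extended real (so `∞` if level `n` is never reached). -/
def tauE (b n : ℕ) (f : ℕ → Vertex b) : ℝ≥0∞ :=
  sInf {t : ℝ≥0∞ | ∃ i : ℕ, t = i ∧ 1 ≤ i ∧ (f i).length = n}

/-- `X_n^* = max_{0 ≤ k ≤ n} |X_k|`. -/
def Xstar (b : ℕ) (f : ℕ → Vertex b) (n : ℕ) : ℕ :=
  (Finset.range (n + 1)).sup fun k => (f k).length

/-- The annealed law `ℙ = ∫ P_ω 𝐏(dω)` of the walk (started at the root). -/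
def Setup.annealed (S : Setup b Ω P) : Measure (ℕ → Vertex b) :=
  P.bind fun ω => S.Pw ω ([] : Vertex b)

/-- The walk is recurrent: almost surely, it returns to the root infinitely often. -/
def Setup.Recurrent (S : Setup b Ω P) : Prop :=
  ∀ᵐ ω ∂P, S.Pw ω ([] : Vertex b) {f | ∀ N : ℕ, ∃ i ≥ N, f i = ([] : Vertex b)} = 1

/-- The law of the step `S_1` of the random walk associated to the branching random
walk via `𝐄[g(S_1)] = b 𝐄[A g(log A)]`. -/
def Setup.stepLaw (S : Setup b Ω P) : Measure ℝ :=
  (b : ℝ≥0∞) • Measure.map Real.log (S.μA.withDensity fun a => ENNReal.ofReal a)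

/-- `β_n(x) = P_ω{starting from x, the walk hits 𝕋_n before hitting x⃖}`. -/
def Setup.betaP (S : Setup b Ω P) (ω : Ω) (n : ℕ) (x : Vertex b) : ℝ :=
  (S.Pw ω x {f | ∃ i : ℕ, (f i).length = n ∧ ∀ j ≤ i, f j ≠ x.tail}).toReal

/-- `β_n(x)` defined by the recursion of Section 6 of the paper:
`β_n(x) = 1` for `|x| ≥ n`, and
`β_n(x) = (∑ᵢ A(xᵢ) β_n(xᵢ)) / (1 + ∑ᵢ A(xᵢ) β_n(xᵢ))` below level `n`. -/
def Setup.betaRec (S : Setup b Ω P) (ω : Ω) (n : ℕ) (x : Vertex b) : ℝ :=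
  if h : n ≤ x.length then 1
  else
    (∑ i : Fin b, S.A ω (i :: x) * S.betaRec ω n (i :: x)) /
      (1 + ∑ i : Fin b, S.A ω (i :: x) * S.betaRec ω n (i :: x))
termination_by n - x.length
decreasing_by all_goals (simp only [List.length_cons]; omega)

/-- `γ_n(x)` defined by the recursion of Section 6 of the paper:
`γ_n(x) = 0` for `|x| ≥ n`, and
`γ_n(x) = (1/ω(x,x⃖) + ∑ᵢ A(xᵢ) γ_n(xᵢ)) / (1 + ∑ᵢ A(xᵢ) β_n(xᵢ))` below level `n`. -/
def Setup.gammaRec (S : Setup b Ω P) (ω : Ω) (n : ℕ) (x : Vertex b) : ℝ :=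
  if h : n ≤ x.length then 0
  else
    (1 / S.env ω x x.tail + ∑ i : Fin b, S.A ω (i :: x) * S.gammaRec ω n (i :: x)) /
      (1 + ∑ i : Fin b, S.A ω (i :: x) * S.betaRec ω n (i :: x))
termination_by n - x.length
decreasing_by all_goals (simp only [List.length_cons]; omega)

/-- `ϱ_n = ∑ᵢ ω(e,eᵢ) β_n(eᵢ)` (with `β_n` given by the recursion). -/
def Setup.rhoRec (S : Setup b Ω P) (ω : Ω) (n : ℕ) : ℝ :=
  ∑ i : Fin b, S.env ω ([] : Vertex b) ([i]) * S.betaRec ω n ([i])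

/-- `γ_n(e) = ∑ᵢ ω(e,eᵢ) γ_n(eᵢ)`. -/
def Setup.gammaRoot (S : Setup b Ω P) (ω : Ω) (n : ℕ) : ℝ :=
  ∑ i : Fin b, S.env ω ([] : Vertex b) ([i]) * S.gammaRec ω n ([i])

open scoped Classical in
/-- `#E_m` where `E_m = {x ∈ 𝕋_m : max_{z ∈ ]]e,x]]} |V(z)| ≤ m^{1/3}}`. -/
def Setup.Ecount (S : Setup b Ω P) (ω : Ω) (m : ℕ) : ℕ :=
  (Finset.univ.filter fun g : Fin m → Fin b =>
      ∀ k : Fin m, |S.V ω ((List.ofFn g).drop (k : ℕ))| ≤ (m : ℝ) ^ ((1 : ℝ) / 3)).card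

section Aux
variable {b : ℕ} (E : Vertex b → Vertex b → ℝ) (n : ℕ)

/-- success-by-time-t probability, absorbed at root (0) and level n (1). -/
def Ssucc : ℕ → Vertex b → ℝ
  | 0, v => if v.length = n then 1 else 0
  | t+1, v => if v.length = n then 1 else if v = [] then 0 else
      E v v.tail * Ssucc t v.tail + ∑ i : Fin b, E v (i :: v) * Ssucc t (i :: v)

/-- still-alive-at-time-t mass. -/
def Aalive : ℕ → Vertex b → ℝ
  | 0, v => if v.length = n ∨ v = [] then 0 else 1
  | t+1, v => if v.length = n ∨ v = [] then 0 else
      E v v.tail * Aalive t v.tail + ∑ i : Fin b, E v (i :: v) * Aalive t (i :: v)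

variable {E n}
variable {ε : ℝ} (hε : 0 < ε) (hε1 : ε ≤ 1)
  (hnn : ∀ v y, 0 ≤ E v y)
  (hsum : ∀ v : Vertex b, v ≠ [] → E v v.tail + ∑ i : Fin b, E v (i :: v) = 1)
  (hellc : ∀ (v : Vertex b) (i : Fin b), ε ≤ E v (i :: v))
  (hellt : ∀ v : Vertex b, v ≠ [] → ε ≤ E v v.tail)

lemma Aalive_absorb {v : Vertex b} (h : v.length = n ∨ v = []) (t : ℕ) :
    Aalive E n t v = 0 := by cases t <;> simp [Aalive, h]

lemma Aalive_interior {v : Vertex b} (h : ¬ (v.length = n ∨ v = [])) (t : ℕ) :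
    Aalive E n (t+1) v
      = E v v.tail * Aalive E n t v.tail + ∑ i : Fin b, E v (i :: v) * Aalive E n t (i :: v) := by
  simp [Aalive, h]

lemma Ssucc_root (hn : 0 < n) (t : ℕ) : Ssucc E n t ([] : Vertex b) = 0 := by
  cases t <;> simp [Ssucc, Nat.ne_of_lt hn]

lemma Ssucc_level {v : Vertex b} (h : v.length = n) (t : ℕ) : Ssucc E n t v = 1 := by
  cases t <;> simp [Ssucc, h]

lemma Ssucc_interior {v : Vertex b} (h1 : v.length ≠ n) (h2 : v ≠ []) (t : ℕ) :
    Ssucc E n (t+1) v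
      = E v v.tail * Ssucc E n t v.tail + ∑ i : Fin b, E v (i :: v) * Ssucc E n t (i :: v) := by
  simp [Ssucc, h1, h2]

include hnn hsum in
lemma Aalive_nonneg_le_one (t : ℕ) (v : Vertex b) :
    0 ≤ Aalive E n t v ∧ Aalive E n t v ≤ 1 := by
  induction t generalizing v with
  | zero => by_cases h : v.length = n ∨ v = [] <;> simp [Aalive, h]
  | succ t ih =>
    by_cases h : v.length = n ∨ v = []
    · simp [Aalive, h]
    · have hv : v ≠ [] := fun hv => h (Or.inr hv)
      rw [Aalive_interior h]
      constructor
      · have h1 : 0 ≤ E v v.tail * Aalive E n t v.tail :=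
          mul_nonneg (hnn _ _) (ih _).1
        have h2 : 0 ≤ ∑ i : Fin b, E v (i :: v) * Aalive E n t (i :: v) :=
          Finset.sum_nonneg fun i _ => mul_nonneg (hnn _ _) (ih _).1
        linarith
      · calc E v v.tail * Aalive E n t v.tail + ∑ i : Fin b, E v (i :: v) * Aalive E n t (i :: v)
            ≤ E v v.tail * 1 + ∑ i : Fin b, E v (i :: v) * 1 := by
              gcongr with i
              · exact hnn _ _
              · exact (ih _).2
              · exact hnn _ _
              · exact (ih _).2
          _ = 1 := by simpa using hsum v hv

include hnn hsum in
lemma Aalive_nonneg (t : ℕ) (v : Vertex b) : 0 ≤ Aalive E n t v :=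
  (Aalive_nonneg_le_one hnn hsum t v).1

include hnn hsum in
lemma Aalive_succ_le (t : ℕ) (w : Vertex b) : Aalive E n (t+1) w ≤ Aalive E n t w := by
  induction t generalizing w with
  | zero =>
    by_cases hw : w.length = n ∨ w = []
    · simp [Aalive_absorb hw]
    · have := (Aalive_nonneg_le_one (n := n) hnn hsum 1 w).2
      simpa [Aalive, hw] using this
  | succ s ihs =>
    by_cases hw : w.length = n ∨ w = []
    · simp [Aalive_absorb hw]
    · rw [Aalive_interior hw, Aalive_interior hw]
      gcongr with i
      · exact hnn _ _
      · exact ihs _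
      · exact hnn _ _
      · exact ihs _

include hnn hsum in
lemma Aalive_antitone {t t' : ℕ} (h : t ≤ t') (v : Vertex b) :
    Aalive E n t' v ≤ Aalive E n t v := by
  induction t' with
  | zero => simp [Nat.le_zero.mp h]
  | succ t' ih =>
    rcases Nat.eq_or_lt_of_le h with rfl | hlt
    · exact le_refl _
    · exact le_trans (Aalive_succ_le hnn hsum t' v) (ih (Nat.lt_succ_iff.mp hlt))

include hε hε1 hnn hsum hellc hellt in
lemma Aalive_kill (hb : 0 < b) :
    ∀ (k : ℕ), 1 ≤ k → ∀ v : Vertex b, v ≠ [] → v.length + k = n →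
      Aalive E n k v ≤ 1 - ε ^ k := by
  intro k
  induction k with
  | zero => omega
  | succ k ih =>
    intro _ v hv hlen
    have hvl : ¬ (v.length = n ∨ v = []) := by
      push_neg; exact ⟨by omega, hv⟩
    rw [Aalive_interior hvl]
    have i0 : Fin b := ⟨0, hb⟩
    rcases Nat.eq_zero_or_pos k with rfl | hk
    · -- children are at level n, so their Aalive 0 vanishes
      have hch : ∀ i : Fin b, Aalive E n 0 (i :: v) = 0 := by
        intro i
        exact Aalive_absorb (Or.inl (by simp; omega)) 0
      have hsum0 : ∑ i : Fin b, E v (i :: v) * Aalive E n 0 (i :: v) = 0 := by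
        simp [hch]
      rw [hsum0]
      have h1 : Aalive E n 0 v.tail ≤ 1 := (Aalive_nonneg_le_one (n := n) hnn hsum 0 _).2
      have h2 : E v v.tail * Aalive E n 0 v.tail ≤ E v v.tail * 1 :=
        mul_le_mul_of_nonneg_left h1 (hnn _ _)
      have h3 : E v v.tail = 1 - ∑ i : Fin b, E v (i :: v) := by
        have := hsum v hv; linarith
      have h4 : ε ≤ ∑ i : Fin b, E v (i :: v) := by
        calc ε = ε * 1 := by ring
        _ ≤ ε * b := by
            have : (1:ℝ) ≤ b := by exact_mod_cast hb
            nlinarith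
        _ = ∑ _i : Fin b, ε := by simp [mul_comm]
        _ ≤ ∑ i : Fin b, E v (i :: v) := Finset.sum_le_sum fun i _ => hellc v i
      calc E v v.tail * Aalive E n 0 v.tail + 0 ≤ E v v.tail := by linarith
        _ ≤ 1 - ε ^ 1 := by rw [h3]; simp; linarith
    · -- inductive step
      have hich : Aalive E n k (i0 :: v) ≤ 1 - ε ^ k := by
        refine ih hk (i0 :: v) (by simp) (by simp; omega)
      have hboundt : Aalive E n k v.tail ≤ 1 := (Aalive_nonneg_le_one (n := n) hnn hsum k _).2
      have hboundc : ∀ i : Fin b, Aalive E n k (i :: v) ≤ 1 :=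
        fun i => (Aalive_nonneg_le_one (n := n) hnn hsum k _).2
      have step1 : ∑ i : Fin b, E v (i :: v) * Aalive E n k (i :: v)
          ≤ (∑ i : Fin b, E v (i :: v)) - E v (i0 :: v) * ε ^ k := by
        have hsplit : E v (i0 :: v) * Aalive E n k (i0 :: v)
              + ∑ i ∈ Finset.univ.erase i0, E v (i :: v) * Aalive E n k (i :: v)
            = ∑ i : Fin b, E v (i :: v) * Aalive E n k (i :: v) :=
          Finset.add_sum_erase Finset.univ
            (fun i : Fin b => E v (i :: v) * Aalive E n k (i :: v)) (Finset.mem_univ i0)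
        have hsplit2 : E v (i0 :: v) + ∑ i ∈ Finset.univ.erase i0, E v (i :: v)
            = ∑ i : Fin b, E v (i :: v) :=
          Finset.add_sum_erase Finset.univ
            (fun i : Fin b => E v (i :: v)) (Finset.mem_univ i0)
        rw [← hsplit, ← hsplit2]
        have hεk0 : (0:ℝ) ≤ ε ^ k := le_of_lt (pow_pos hε k)
        have hterm : E v (i0 :: v) * Aalive E n k (i0 :: v)
            ≤ E v (i0 :: v) - E v (i0 :: v) * ε ^ k := by
          nlinarith [hnn v (i0 :: v), hich]
        have hrest : ∑ i ∈ Finset.univ.erase i0, E v (i :: v) * Aalive E n k (i :: v)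
            ≤ ∑ i ∈ Finset.univ.erase i0, E v (i :: v) := by
          refine Finset.sum_le_sum fun i _ => ?_
          nlinarith [hnn v (i :: v), hboundc i]
        linarith
      have hεk : (0:ℝ) ≤ ε ^ k := le_of_lt (pow_pos hε k)
      have : E v v.tail * Aalive E n k v.tail ≤ E v v.tail :=
        by nlinarith [hnn v v.tail]
      have hE0 : ε ≤ E v (i0 :: v) := hellc v i0
      calc E v v.tail * Aalive E n k v.tail + ∑ i : Fin b, E v (i :: v) * Aalive E n k (i :: v)
          ≤ E v v.tail + ((∑ i : Fin b, E v (i :: v)) - E v (i0 :: v) * ε ^ k) := by linarith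
        _ = 1 - E v (i0 :: v) * ε ^ k := by rw [← hsum v hv]; ring
        _ ≤ 1 - ε ^ (k + 1) := by
            have : ε ^ (k+1) = ε * ε ^ k := by ring
            nlinarith

include hε hε1 hnn hsum hellc hellt in
lemma Aalive_uniform (hb : 0 < b) (hn : 1 ≤ n) (v : Vertex b) (hv : v.length ≤ n) :
    Aalive E n (n - 1) v ≤ 1 - ε ^ (n - 1) := by
  by_cases habs : v.length = n ∨ v = []
  · rw [Aalive_absorb habs]
    have : ε ^ (n-1) ≤ 1 := pow_le_one₀ (le_of_lt hε) hε1
    linarith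
  · push_neg at habs
    set k := n - v.length with hk
    have hk1 : 1 ≤ k := by
      have : v.length ≠ n := habs.1
      omega
    have hkn : k ≤ n - 1 := by
      have hvl : 1 ≤ v.length := by
        cases v with
        | nil => exact absurd rfl habs.2
        | cons a l => simp
      omega
    calc Aalive E n (n-1) v ≤ Aalive E n k v := Aalive_antitone hnn hsum hkn v
      _ ≤ 1 - ε ^ k := Aalive_kill hε hε1 hnn hsum hellc hellt hb k hk1 v habs.2 (by omega)
      _ ≤ 1 - ε ^ (n - 1) := by
          have := pow_le_pow_of_le_one (le_of_lt hε) hε1 hkn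
          linarith

include hnn hsum in
lemma Aalive_scale {c : ℝ} (hc : 0 ≤ c) {t : ℕ}
    (h : ∀ y : Vertex b, y.length ≤ n → Aalive E n t y ≤ c) :
    ∀ (s : ℕ) (v : Vertex b), v.length ≤ n → Aalive E n (s + t) v ≤ c * Aalive E n s v := by
  intro s
  induction s with
  | zero =>
    intro v hv
    by_cases habs : v.length = n ∨ v = []
    · simp [Aalive_absorb habs]
    · have : Aalive E n 0 v = 1 := by simp [Aalive, habs]
      rw [Nat.zero_add, this, mul_one]
      exact h v hv
  | succ s ih =>
    intro v hv
    by_cases habs : v.length = n ∨ v = []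
    · simp [Aalive_absorb habs]
    · have hs : s + 1 + t = (s + t) + 1 := by omega
      rw [hs, Aalive_interior habs, Aalive_interior habs]
      have hvne : v ≠ [] := fun hvv => habs (Or.inr hvv)
      have hvl : v.length ≤ n - 1 := by
        have : v.length ≠ n := fun hh => habs (Or.inl hh)
        omega
      have htail : v.tail.length ≤ n := by
        have : v.tail.length = v.length - 1 := by simp
        omega
      have hchild : ∀ i : Fin b, (i :: v).length ≤ n := by
        intro i; simp; omega
      have h1 : E v v.tail * Aalive E n (s + t) v.tail
          ≤ E v v.tail * (c * Aalive E n s v.tail) :=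
        mul_le_mul_of_nonneg_left (ih v.tail htail) (hnn _ _)
      have h2 : ∀ i : Fin b, E v (i :: v) * Aalive E n (s + t) (i :: v)
          ≤ E v (i :: v) * (c * Aalive E n s (i :: v)) :=
        fun i => mul_le_mul_of_nonneg_left (ih _ (hchild i)) (hnn _ _)
      calc E v v.tail * Aalive E n (s+t) v.tail + ∑ i : Fin b, E v (i :: v) * Aalive E n (s+t) (i :: v)
          ≤ E v v.tail * (c * Aalive E n s v.tail)
            + ∑ i : Fin b, E v (i :: v) * (c * Aalive E n s (i :: v)) := by
            exact add_le_add h1 (Finset.sum_le_sum fun i _ => h2 i)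
        _ = c * (E v v.tail * Aalive E n s v.tail + ∑ i : Fin b, E v (i :: v) * Aalive E n s (i :: v)) := by
            rw [mul_add, Finset.mul_sum]
            congr 1
            · ring
            · exact Finset.sum_congr rfl fun i _ => by ring

include hε hε1 hnn hsum hellc hellt in
lemma Aalive_geo (hb : 0 < b) (hn : 1 ≤ n) :
    ∀ (m : ℕ) (v : Vertex b), v.length ≤ n →
      Aalive E n (m * (n - 1)) v ≤ (1 - ε ^ (n - 1)) ^ m := by
  intro m
  induction m with
  | zero =>
    intro v hv
    simpa using (Aalive_nonneg_le_one (n := n) hnn hsum 0 v).2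
  | succ m ih =>
    intro v hv
    have hδ : (0:ℝ) ≤ 1 - ε ^ (n-1) := by
      have : ε ^ (n-1) ≤ 1 := pow_le_one₀ (le_of_lt hε) hε1
      linarith
    have hc : (0:ℝ) ≤ (1 - ε ^ (n-1)) ^ m := pow_nonneg hδ m
    have key := Aalive_scale hnn hsum hc (t := m * (n-1)) (fun y hy => ih y hy) (n-1) v hv
    have harith : (m+1) * (n-1) = (n-1) + m * (n-1) := by ring
    rw [harith]
    calc Aalive E n ((n-1) + m * (n-1)) v ≤ (1 - ε ^ (n-1)) ^ m * Aalive E n (n-1) v := key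
      _ ≤ (1 - ε ^ (n-1)) ^ m * (1 - ε ^ (n-1)) :=
          mul_le_mul_of_nonneg_left (Aalive_uniform hε hε1 hnn hsum hellc hellt hb hn v hv) hc
      _ = (1 - ε ^ (n-1)) ^ (m+1) := by ring


/-! ### The ray and the subharmonic function -/

variable (E)

/-- `z_k`: the ancestor of the ray `r` at generation `k`. -/
def zv (r : Vertex b) (k : ℕ) : Vertex b := r.drop (r.length - k)

/-- position on the ray: the generation of the deepest ancestor of `v` lying on the ray. -/
def rayK (r v : Vertex b) : ℕ :=
  (((Finset.range (r.length + 1)).filter (fun k => zv r k <:+ v)).max'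
    ⟨0, by refine Finset.mem_filter.mpr ⟨Finset.mem_range.mpr (Nat.succ_pos _), ?_⟩; simp [zv]⟩)

/-- the birth-and-death ratios along the ray. -/
def rhoRatio (r : Vertex b) (j : ℕ) : ℝ :=
  ∏ l ∈ Finset.range j, E (zv r (l+1)) (zv r l) / E (zv r (l+1)) (zv r (l+2))

/-- the harmonic scale along the ray. -/
def sfun (r : Vertex b) (k : ℕ) : ℝ :=
  (∑ j ∈ Finset.range k, rhoRatio E r j) / (∑ j ∈ Finset.range r.length, rhoRatio E r j)

/-- the subharmonic minorant. -/
def uf (r : Vertex b) (v : Vertex b) : ℝ :=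
  if r.length ≤ v.length then 1 else sfun E r (rayK r v)

variable {E}

lemma zv_length {r : Vertex b} {k : ℕ} (hk : k ≤ r.length) : (zv r k).length = k := by
  simp [zv]; omega

lemma zv_suffix (r : Vertex b) (k : ℕ) : zv r k <:+ r := List.drop_suffix _ _

lemma zv_tail {r : Vertex b} {k : ℕ} (hk1 : 1 ≤ k) (hk : k ≤ r.length) :
    (zv r k).tail = zv r (k - 1) := by
  unfold zv
  rw [List.tail_drop]
  congr 1
  omega

lemma zv_succ {r : Vertex b} {k : ℕ} (hk : k + 1 ≤ r.length) :
    zv r (k+1) = r[r.length - k - 1] :: zv r k := by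
  unfold zv
  have h1 : r.length - (k+1) = r.length - k - 1 := by omega
  simp only [h1]
  rw [List.drop_eq_getElem_cons (by omega),
    show r.length - k - 1 + 1 = r.length - k from by omega]

lemma rayK_le (r v : Vertex b) : rayK r v ≤ r.length := by
  have := Finset.max'_mem (((Finset.range (r.length + 1)).filter (fun k => zv r k <:+ v)))
    ⟨0, by refine Finset.mem_filter.mpr ⟨Finset.mem_range.mpr (Nat.succ_pos _), ?_⟩; simp [zv]⟩
  rw [Finset.mem_filter, Finset.mem_range] at this
  have := this.1
  unfold rayK
  omega

lemma rayK_suffix (r v : Vertex b) : zv r (rayK r v) <:+ v := by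
  have := Finset.max'_mem (((Finset.range (r.length + 1)).filter (fun k => zv r k <:+ v)))
    ⟨0, by refine Finset.mem_filter.mpr ⟨Finset.mem_range.mpr (Nat.succ_pos _), ?_⟩; simp [zv]⟩
  rw [Finset.mem_filter] at this
  exact this.2

lemma le_rayK {r v : Vertex b} {k : ℕ} (hk : k ≤ r.length) (h : zv r k <:+ v) :
    k ≤ rayK r v :=
  Finset.le_max' _ k (by rw [Finset.mem_filter, Finset.mem_range]; exact ⟨by omega, h⟩)

lemma rayK_le_length (r v : Vertex b) : rayK r v ≤ v.length := by
  have h := (rayK_suffix r v).length_le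
  rwa [zv_length (rayK_le r v)] at h

lemma rayK_zv {r : Vertex b} {k : ℕ} (hk : k ≤ r.length) : rayK r (zv r k) = k := by
  refine le_antisymm ?_ (le_rayK hk (List.suffix_refl _))
  have := rayK_le_length r (zv r k)
  rwa [zv_length hk] at this

include hnn in
lemma rhoRatio_nonneg (r : Vertex b) (j : ℕ) : 0 ≤ rhoRatio E r j :=
  Finset.prod_nonneg fun l _ => div_nonneg (hnn _ _) (hnn _ _)

include hε hnn hellc hellt in
lemma rhoRatio_pos {r : Vertex b} {j : ℕ} (hj : j + 1 ≤ r.length) : 0 < rhoRatio E r j := by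
  refine Finset.prod_pos fun l hl => ?_
  rw [Finset.mem_range] at hl
  have hl2 : l + 2 ≤ r.length := by omega
  have hnum : ε ≤ E (zv r (l+1)) (zv r l) := by
    have hne : zv r (l+1) ≠ [] := by
      have := zv_length (r := r) (k := l+1) (by omega)
      intro h; rw [h] at this; simp at this
    have := hellt (zv r (l+1)) hne
    rwa [zv_tail (by omega) (by omega), Nat.add_sub_cancel] at this
  have hden : ε ≤ E (zv r (l+1)) (zv r (l+2)) := by
    have hthis := zv_succ (r := r) (k := l + 1) (by omega)
    have e : l + 2 = l + 1 + 1 := by omega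
    rw [e, hthis]
    exact hellc _ _
  exact div_pos (lt_of_lt_of_le hε hnum) (lt_of_lt_of_le hε hden)

include hε hnn hellc hellt in
lemma Zpos {r : Vertex b} (hr : 1 ≤ r.length) :
    0 < ∑ j ∈ Finset.range r.length, rhoRatio E r j := by
  refine Finset.sum_pos (fun j hj => ?_) ⟨0, Finset.mem_range.mpr hr⟩
  rw [Finset.mem_range] at hj
  exact rhoRatio_pos hε hnn hellc hellt (by omega)

include hε hnn hellc hellt in
lemma sfun_mono {r : Vertex b} (hr : 1 ≤ r.length) {k k' : ℕ} (h : k ≤ k') :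
    sfun E r k ≤ sfun E r k' := by
  unfold sfun
  rw [div_le_div_iff_of_pos_right (Zpos hε hnn hellc hellt hr)]
  refine Finset.sum_le_sum_of_subset_of_nonneg (Finset.range_subset_range.mpr h) ?_
  intro j _ _; exact rhoRatio_nonneg hnn r j

include hε hnn hellc hellt in
lemma sfun_nonneg {r : Vertex b} (hr : 1 ≤ r.length) (k : ℕ) : 0 ≤ sfun E r k :=
  div_nonneg (Finset.sum_nonneg fun j _ => rhoRatio_nonneg hnn r j)
    (le_of_lt (Zpos hε hnn hellc hellt hr))

include hε hnn hellc hellt in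
lemma sfun_le_one {r : Vertex b} (hr : 1 ≤ r.length) {k : ℕ} (hk : k ≤ r.length) :
    sfun E r k ≤ 1 := by
  unfold sfun
  rw [div_le_one (Zpos hε hnn hellc hellt hr)]
  refine Finset.sum_le_sum_of_subset_of_nonneg (Finset.range_subset_range.mpr hk) ?_
  intro j _ _; exact rhoRatio_nonneg hnn r j

lemma sfun_zero (r : Vertex b) : sfun E r 0 = 0 := by simp [sfun]

include hε hnn hellc hellt in
lemma sfun_full {r : Vertex b} (hr : 1 ≤ r.length) : sfun E r r.length = 1 :=
  div_self (ne_of_gt (Zpos hε hnn hellc hellt hr))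

include hε hnn hellc hellt in
lemma uf_nonneg {r : Vertex b} (hr : 1 ≤ r.length) (v : Vertex b) : 0 ≤ uf E r v := by
  unfold uf
  split
  · norm_num
  · exact sfun_nonneg hε hnn hellc hellt hr _

include hε hnn hellc hellt in
lemma sfun_rayK_le_uf {r : Vertex b} (hr : 1 ≤ r.length) {k : ℕ} (hk : k ≤ r.length)
    (v : Vertex b) (h : zv r k <:+ v) : sfun E r k ≤ uf E r v := by
  unfold uf
  split
  · exact sfun_le_one hε hnn hellc hellt hr hk
  · exact sfun_mono hε hnn hellc hellt hr (le_rayK hk h)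

include hε hnn hsum hellc hellt in
lemma uf_subharm {r : Vertex b} {v : Vertex b} (hv : v ≠ []) (hvl : v.length < r.length) :
    uf E r v ≤ E v v.tail * uf E r v.tail + ∑ i : Fin b, E v (i :: v) * uf E r (i :: v) := by
  have hr : 1 ≤ r.length := by
    have : 1 ≤ v.length := by cases v with | nil => exact absurd rfl hv | cons a l => simp
    omega
  set Z := ∑ j ∈ Finset.range r.length, rhoRatio E r j with hZ
  have hZpos : 0 < Z := Zpos hε hnn hellc hellt hr
  have hufv : uf E r v = sfun E r (rayK r v) := by
    unfold uf; rw [if_neg (by omega)]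
  set k0 := rayK r v with hk0
  have hk0r : k0 ≤ r.length := rayK_le r v
  have hk0v : k0 ≤ v.length := rayK_le_length r v
  by_cases hon : k0 = v.length
  · -- on the ray
    have hveq : zv r k0 = v :=
      List.IsSuffix.eq_of_length (rayK_suffix r v) (by rw [zv_length hk0r, hon])
    have hk01 : 1 ≤ k0 := by
      rcases Nat.eq_zero_or_pos k0 with h0 | h1
      · exfalso; apply hv; rw [← hveq, h0]; unfold zv; simp
      · exact h1
    have hk0lt : k0 < r.length := by omega
    -- the tail
    have htail : v.tail = zv r (k0 - 1) := by rw [← hveq, zv_tail hk01 hk0r]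
    have huftail : uf E r v.tail = sfun E r (k0 - 1) := by
      rw [htail]
      unfold uf
      rw [if_neg (by rw [zv_length (by omega)]; omega), rayK_zv (by omega)]
    -- the ray child
    set i0 : Fin b := r[r.length - k0 - 1]'(by omega) with hi0
    have hchild : zv r (k0 + 1) = i0 :: v := by rw [zv_succ (by omega), hveq]
    have hufchild : sfun E r (k0 + 1) ≤ uf E r (i0 :: v) := by
      rw [← hchild]
      rcases Nat.eq_or_lt_of_le (Nat.succ_le_of_lt hk0lt) with he | hlt
      · unfold uf
        rw [if_pos (by rw [zv_length (by omega)]; omega)]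
        have he' : k0 + 1 = r.length := he
        rw [he', sfun_full hε hnn hellc hellt hr]
      · unfold uf
        rw [if_neg (by rw [zv_length (by omega)]; omega), rayK_zv (by omega)]
    -- other children
    have hother : ∀ i : Fin b, sfun E r k0 ≤ uf E r (i :: v) := by
      intro i
      refine sfun_rayK_le_uf hε hnn hellc hellt hr hk0r _ ?_
      rw [hveq]
      exact (List.suffix_cons i v)
    -- the key identity
    set p := E v (i0 :: v) with hp
    set q := E v v.tail with hq
    have hppos : 0 < p := lt_of_lt_of_le hε (hellc v i0)
    have hqnn : 0 ≤ q := hnn _ _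
    have hrho : rhoRatio E r k0 = rhoRatio E r (k0 - 1) * (q / p) := by
      conv_lhs => rw [show k0 = (k0 - 1) + 1 from by omega]
      rw [rhoRatio, Finset.prod_range_succ, ← rhoRatio]
      congr 1
      rw [show k0 - 1 + 1 = k0 from by omega, show k0 - 1 + 2 = k0 + 1 from by omega,
        hveq, hchild, ← htail]
    have hsdiff1 : sfun E r (k0 + 1) = sfun E r k0 + rhoRatio E r k0 / Z := by
      unfold sfun
      rw [Finset.sum_range_succ, ← hZ, add_div]
    have hsdiff2 : sfun E r k0 = sfun E r (k0 - 1) + rhoRatio E r (k0 - 1) / Z := by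
      unfold sfun
      rw [show k0 = (k0 - 1) + 1 from by omega, Finset.sum_range_succ, ← hZ, add_div,
        show k0 - 1 + 1 - 1 = k0 - 1 from by omega]
    -- put things together
    have hsplit : p * uf E r (i0 :: v)
          + ∑ i ∈ Finset.univ.erase i0, E v (i :: v) * uf E r (i :: v)
        = ∑ i : Fin b, E v (i :: v) * uf E r (i :: v) :=
      Finset.add_sum_erase Finset.univ
        (fun i : Fin b => E v (i :: v) * uf E r (i :: v)) (Finset.mem_univ i0)
    have hbound1 : p * sfun E r (k0 + 1) ≤ p * uf E r (i0 :: v) :=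
      mul_le_mul_of_nonneg_left hufchild (le_of_lt hppos)
    have hbound2 : ∑ i ∈ Finset.univ.erase i0, E v (i :: v) * sfun E r k0
        ≤ ∑ i ∈ Finset.univ.erase i0, E v (i :: v) * uf E r (i :: v) :=
      Finset.sum_le_sum fun i _ => mul_le_mul_of_nonneg_left (hother i) (hnn _ _)
    have hbound3 : q * sfun E r (k0 - 1) ≤ q * uf E r v.tail := by
      rw [huftail]
    have hesum : q + (p + ∑ i ∈ Finset.univ.erase i0, E v (i :: v)) = 1 := by
      have h2 : p + ∑ i ∈ Finset.univ.erase i0, E v (i :: v)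
          = ∑ i : Fin b, E v (i :: v) :=
        Finset.add_sum_erase Finset.univ (fun i : Fin b => E v (i :: v)) (Finset.mem_univ i0)
      rw [h2]
      exact hsum v hv
    have hkey : p * (rhoRatio E r k0 / Z) = q * (rhoRatio E r (k0 - 1) / Z) := by
      rw [hrho]
      field_simp
    have hrest_nn : 0 ≤ ∑ i ∈ Finset.univ.erase i0, E v (i :: v) :=
      Finset.sum_nonneg fun i _ => hnn _ _
    have hs0 : 0 ≤ sfun E r k0 := sfun_nonneg hε hnn hellc hellt hr _
    calc uf E r v = sfun E r k0 := hufv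
      _ = q * sfun E r (k0 - 1) + p * sfun E r (k0 + 1)
          + (∑ i ∈ Finset.univ.erase i0, E v (i :: v)) * sfun E r k0 := by
          rw [hsdiff1, hsdiff2]
          have expand : q * (sfun E r (k0-1)) + p * (sfun E r (k0-1) + rhoRatio E r (k0-1)/Z + rhoRatio E r k0 / Z)
              + (∑ i ∈ Finset.univ.erase i0, E v (i :: v)) * (sfun E r (k0-1) + rhoRatio E r (k0-1)/Z)
              = (q + (p + ∑ i ∈ Finset.univ.erase i0, E v (i :: v))) * (sfun E r (k0-1) + rhoRatio E r (k0-1)/Z)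
                + (p * (rhoRatio E r k0 / Z) - q * (rhoRatio E r (k0-1)/Z)) + q * (rhoRatio E r (k0-1)/Z) - q * (rhoRatio E r (k0-1)/Z) := by
            ring
          rw [expand, hkey, hesum]
          ring
      _ ≤ q * uf E r v.tail + p * uf E r (i0 :: v)
          + ∑ i ∈ Finset.univ.erase i0, E v (i :: v) * uf E r (i :: v) := by
          have : (∑ i ∈ Finset.univ.erase i0, E v (i :: v)) * sfun E r k0
              = ∑ i ∈ Finset.univ.erase i0, E v (i :: v) * sfun E r k0 := by
            rw [Finset.sum_mul]
          rw [this]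
          exact add_le_add (add_le_add hbound3 hbound1) hbound2
      _ = E v v.tail * uf E r v.tail + ∑ i : Fin b, E v (i :: v) * uf E r (i :: v) := by
          rw [← hsplit, ← hq]
          ring
  · -- off the ray
    have hk0lt : k0 < v.length := lt_of_le_of_ne hk0v hon
    have hsuffv : zv r k0 <:+ v := rayK_suffix r v
    have htail : sfun E r k0 ≤ uf E r v.tail := by
      refine sfun_rayK_le_uf hε hnn hellc hellt hr hk0r _ ?_
      cases v with
      | nil => exact absurd rfl hv
      | cons a l =>
        rcases List.suffix_cons_iff.mp hsuffv with h | h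
        · exfalso
          have := congrArg List.length h
          rw [zv_length hk0r] at this
          simp at this
          simp at hk0lt
          omega
        · exact h
    have hchild : ∀ i : Fin b, sfun E r k0 ≤ uf E r (i :: v) := fun i =>
      sfun_rayK_le_uf hε hnn hellc hellt hr hk0r _ (hsuffv.trans (List.suffix_cons i v))
    have hs0 : 0 ≤ sfun E r k0 := sfun_nonneg hε hnn hellc hellt hr _
    calc uf E r v = sfun E r k0 := hufv
      _ = (E v v.tail + ∑ i : Fin b, E v (i :: v)) * sfun E r k0 := by
          rw [hsum v hv, one_mul]
      _ = E v v.tail * sfun E r k0 + ∑ i : Fin b, E v (i :: v) * sfun E r k0 := by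
          rw [add_mul, Finset.sum_mul]
      _ ≤ E v v.tail * uf E r v.tail + ∑ i : Fin b, E v (i :: v) * uf E r (i :: v) :=
          add_le_add (mul_le_mul_of_nonneg_left htail (hnn _ _))
            (Finset.sum_le_sum fun i _ => mul_le_mul_of_nonneg_left (hchild i) (hnn _ _))

include hε hnn hsum hellc hellt in
lemma uf_le_Ssucc_add {r : Vertex b} (hrn : r.length = n) (hn : 1 ≤ n) :
    ∀ (t : ℕ) (v : Vertex b), v.length ≤ n → uf E r v ≤ Ssucc E n t v + Aalive E n t v := by
  have hr : 1 ≤ r.length := by omega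
  intro t
  induction t with
  | zero =>
    intro v hvn
    by_cases hlev : v.length = n
    · have : uf E r v = 1 := by unfold uf; rw [if_pos (by omega)]
      rw [this, Ssucc_level hlev, Aalive_absorb (Or.inl hlev)]
      norm_num
    · by_cases hroot : v = []
      · subst hroot
        have : uf E r ([] : Vertex b) = 0 := by
          unfold uf
          rw [if_neg (by simp only [List.length_nil]; omega)]
          have : rayK r ([] : Vertex b) = 0 := by
            have := rayK_le_length r ([] : Vertex b)
            simpa using this
          rw [this, sfun_zero]
        rw [this, Ssucc_root (by omega), Aalive_absorb (Or.inr rfl)]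
        norm_num
      · have h1 : uf E r v ≤ 1 := by
          unfold uf
          split
          · exact le_rfl
          · exact sfun_le_one hε hnn hellc hellt hr (by rw [hrn]; exact le_trans (rayK_le_length r v) hvn)
        have h2 : Ssucc E n 0 v = 0 := by simp [Ssucc, hlev]
        have h3 : Aalive E n 0 v = 1 := by simp [Aalive, hlev, hroot]
        rw [h2, h3]; linarith
  | succ t ih =>
    intro v hvn
    by_cases hlev : v.length = n
    · have : uf E r v = 1 := by unfold uf; rw [if_pos (by omega)]
      rw [this, Ssucc_level hlev, Aalive_absorb (Or.inl hlev)]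
      norm_num
    · by_cases hroot : v = []
      · subst hroot
        have : uf E r ([] : Vertex b) = 0 := by
          unfold uf
          rw [if_neg (by simp only [List.length_nil]; omega)]
          have : rayK r ([] : Vertex b) = 0 := by
            have := rayK_le_length r ([] : Vertex b)
            simpa using this
          rw [this, sfun_zero]
        rw [this, Ssucc_root (by omega), Aalive_absorb (Or.inr rfl)]
        norm_num
      · have hvlt : v.length < n := lt_of_le_of_ne hvn hlev
        have habs : ¬ (v.length = n ∨ v = []) := by push_neg; exact ⟨hlev, hroot⟩
        rw [Ssucc_interior hlev hroot, Aalive_interior habs]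
        have step := uf_subharm hε hnn hsum hellc hellt (r := r) (v := v) hroot (by omega)
        have htail : uf E r v.tail ≤ Ssucc E n t v.tail + Aalive E n t v.tail := by
          refine ih v.tail ?_
          have : v.tail.length = v.length - 1 := by simp
          omega
        have hchild : ∀ i : Fin b, uf E r (i :: v) ≤ Ssucc E n t (i :: v) + Aalive E n t (i :: v) := by
          intro i
          refine ih (i :: v) ?_
          simp
          omega
        calc uf E r v ≤ E v v.tail * uf E r v.tail + ∑ i : Fin b, E v (i :: v) * uf E r (i :: v) := step
          _ ≤ E v v.tail * (Ssucc E n t v.tail + Aalive E n t v.tail)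
              + ∑ i : Fin b, E v (i :: v) * (Ssucc E n t (i :: v) + Aalive E n t (i :: v)) :=
              add_le_add (mul_le_mul_of_nonneg_left htail (hnn _ _))
                (Finset.sum_le_sum fun i _ => mul_le_mul_of_nonneg_left (hchild i) (hnn _ _))
          _ = E v v.tail * Ssucc E n t v.tail + ∑ i : Fin b, E v (i :: v) * Ssucc E n t (i :: v)
              + (E v v.tail * Aalive E n t v.tail + ∑ i : Fin b, E v (i :: v) * Aalive E n t (i :: v)) := by
              simp only [mul_add, Finset.sum_add_distrib]
              ring

/-! ### First-hitting path families -/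

include hnn in
lemma Ssucc_nonneg (t : ℕ) (v : Vertex b) : 0 ≤ Ssucc E n t v := by
  induction t generalizing v with
  | zero => by_cases h : v.length = n <;> simp [Ssucc, h]
  | succ t ih =>
    by_cases h : v.length = n
    · simp [Ssucc, h]
    · by_cases h2 : v = []
      · subst h2
        have hn : 0 < n := by simp at h; omega
        rw [Ssucc_root hn]
      · rw [Ssucc_interior h h2]
        have h1 : 0 ≤ E v v.tail * Ssucc E n t v.tail := mul_nonneg (hnn _ _) (ih _)
        have h3 : 0 ≤ ∑ i : Fin b, E v (i :: v) * Ssucc E n t (i :: v) :=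
          Finset.sum_nonneg fun i _ => mul_nonneg (hnn _ _) (ih _)
        linarith

variable (E n)

/-- neighbours of a vertex, as a finset. -/
def nbhd (v : Vertex b) : Finset (Vertex b) :=
  insert v.tail (Finset.image (fun i : Fin b => i :: v) Finset.univ)

/-- first-hitting paths (hitting level `n` within `t` steps, avoiding the root). -/
def Dsucc : ℕ → Vertex b → Finset (List (Vertex b))
  | 0, v => if v.length = n then {[v]} else ∅
  | t+1, v => if v.length = n then {[v]} else
      (nbhd v).biUnion (fun y => if y = [] then ∅ else (Dsucc t y).image (List.cons v))

/-- the weight of a path. -/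
def Wl : List (Vertex b) → ℝ
  | [] => 1
  | [_] => 1
  | x :: y :: l => E x y * Wl (y :: l)

variable {E n}

lemma Wl_nil : Wl E ([] : List (Vertex b)) = 1 := rfl
lemma Wl_single (v : Vertex b) : Wl E ([v]) = 1 := rfl
lemma Wl_cons_cons (x y : Vertex b) (l : List (Vertex b)) :
    Wl E (x :: y :: l) = E x y * Wl E (y :: l) := rfl

include hnn in
lemma Wl_nonneg (l : List (Vertex b)) : 0 ≤ Wl E l := by
  match l with
  | [] => norm_num [Wl_nil]
  | [v] => norm_num [Wl_single]
  | x :: y :: l' =>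
    rw [Wl_cons_cons]
    exact mul_nonneg (hnn _ _) (Wl_nonneg (y :: l'))

lemma mem_Dsucc_head {t : ℕ} {v : Vertex b} {l : List (Vertex b)}
    (h : l ∈ Dsucc n t v) : ∃ l', l = v :: l' := by
  induction t generalizing v l with
  | zero =>
    by_cases hv : v.length = n
    · simp [Dsucc, hv] at h
      exact ⟨[], h⟩
    · simp [Dsucc, hv] at h
  | succ t ih =>
    by_cases hv : v.length = n
    · simp [Dsucc, hv] at h
      exact ⟨[], h⟩
    · simp only [Dsucc, if_neg hv, Finset.mem_biUnion] at h
      obtain ⟨y, hy, hl⟩ := h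
      by_cases hy0 : y = []
      · simp [hy0] at hl
      · simp only [if_neg hy0, Finset.mem_image] at hl
        obtain ⟨l', _, rfl⟩ := hl
        exact ⟨l', rfl⟩

lemma mem_Dsucc_ne_nil {t : ℕ} {v : Vertex b} {l : List (Vertex b)}
    (hv : v ≠ []) (h : l ∈ Dsucc n t v) : ∀ x ∈ l, x ≠ ([] : Vertex b) := by
  induction t generalizing v l with
  | zero =>
    by_cases hvn : v.length = n
    · simp [Dsucc, hvn] at h
      subst h
      intro x hx
      simp at hx
      subst hx; exact hv
    · simp [Dsucc, hvn] at h
  | succ t ih =>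
    by_cases hvn : v.length = n
    · simp [Dsucc, hvn] at h
      subst h
      intro x hx
      simp at hx
      subst hx; exact hv
    · simp only [Dsucc, if_neg hvn, Finset.mem_biUnion] at h
      obtain ⟨y, hy, hl⟩ := h
      by_cases hy0 : y = []
      · simp [hy0] at hl
      · simp only [if_neg hy0, Finset.mem_image] at hl
        obtain ⟨l', hl', rfl⟩ := hl
        intro x hx
        rcases List.mem_cons.mp hx with rfl | hx'
        · exact hv
        · exact ih hy0 hl' x hx'

lemma mem_Dsucc_getLast {t : ℕ} {v : Vertex b} {l : List (Vertex b)}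
    (h : l ∈ Dsucc n t v) (hl : l ≠ []) : (l.getLast hl).length = n := by
  induction t generalizing v l with
  | zero =>
    by_cases hvn : v.length = n
    · simp [Dsucc, hvn] at h
      subst h
      simpa using hvn
    · simp [Dsucc, hvn] at h
  | succ t ih =>
    by_cases hvn : v.length = n
    · simp [Dsucc, hvn] at h
      subst h
      simpa using hvn
    · simp only [Dsucc, if_neg hvn, Finset.mem_biUnion] at h
      obtain ⟨y, hy, hml⟩ := h
      by_cases hy0 : y = []
      · simp [hy0] at hml
      · simp only [if_neg hy0, Finset.mem_image] at hml
        obtain ⟨l', hl', rfl⟩ := hml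
        have hl'ne : l' ≠ [] := by
          obtain ⟨l'', rfl⟩ := mem_Dsucc_head hl'
          simp
        rw [List.getLast_cons hl'ne]
        exact ih hl' hl'ne

lemma mem_Dsucc_interior {t : ℕ} {v : Vertex b} {l : List (Vertex b)}
    (h : l ∈ Dsucc n t v) : ∀ (j : ℕ) (hj : j + 1 < l.length), (l[j]).length ≠ n := by
  induction t generalizing v l with
  | zero =>
    by_cases hvn : v.length = n
    · simp [Dsucc, hvn] at h
      subst h
      intro j hj
      simp at hj
    · simp [Dsucc, hvn] at h
  | succ t ih =>
    by_cases hvn : v.length = n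
    · simp [Dsucc, hvn] at h
      subst h
      intro j hj
      simp at hj
    · simp only [Dsucc, if_neg hvn, Finset.mem_biUnion] at h
      obtain ⟨y, hy, hml⟩ := h
      by_cases hy0 : y = []
      · simp [hy0] at hml
      · simp only [if_neg hy0, Finset.mem_image] at hml
        obtain ⟨l', hl', rfl⟩ := hml
        intro j hj
        cases j with
        | zero => simpa using hvn
        | succ j' =>
          have hj' : j' + 1 < l'.length := by simpa using hj
          have : (v :: l')[j' + 1] = l'[j'] := by
            simp
          rw [this]
          exact ih hl' j' hj'

include hnn in
lemma Dsucc_sum (hn : 1 ≤ n) {t : ℕ} {v : Vertex b} (hv : v ≠ []) :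
    ∑ l ∈ Dsucc n t v, Wl E l = Ssucc E n t v := by
  induction t generalizing v with
  | zero =>
    by_cases hvn : v.length = n
    · simp [Dsucc, Ssucc, hvn, Wl_single]
    · simp [Dsucc, Ssucc, hvn]
  | succ t ih =>
    by_cases hvn : v.length = n
    · simp [Dsucc, hvn, Ssucc_level hvn, Wl_single]
    · rw [Ssucc_interior hvn hv]
      simp only [Dsucc, if_neg hvn]
      rw [Finset.sum_biUnion ?hdisj]
      case hdisj =>
        intro y hy y' hy' hne
        simp only [Function.onFun, Finset.disjoint_left]
        intro m hm hm'
        by_cases hy0 : y = []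
        · simp [hy0] at hm
        · by_cases hy0' : y' = []
          · simp [hy0'] at hm'
          · simp only [if_neg hy0, if_neg hy0', Finset.mem_image] at hm hm'
            obtain ⟨l1, hl1, rfl⟩ := hm
            obtain ⟨l2, hl2, heq⟩ := hm'
            obtain ⟨l1', rfl⟩ := mem_Dsucc_head hl1
            obtain ⟨l2', rfl⟩ := mem_Dsucc_head hl2
            apply hne
            have := congrArg (fun l => l.getD 1 ([] : Vertex b)) heq
            simpa using this.symm
      -- now the sum over neighbours
      have hterm : ∀ y ∈ nbhd v,
          (∑ m ∈ (if y = [] then (∅ : Finset (List (Vertex b))) else (Dsucc n t y).image (List.cons v)), Wl E m)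
            = E v y * Ssucc E n t y := by
        intro y hy
        by_cases hy0 : y = []
        · subst hy0
          rw [Ssucc_root (by omega), mul_zero, if_pos rfl]
          simp
        · rw [if_neg hy0]
          rw [Finset.sum_image (by intro a _ a' _ h; exact (List.cons_injective) h)]
          have : ∀ l ∈ Dsucc n t y, Wl E (v :: l) = E v y * Wl E l := by
            intro l hl
            obtain ⟨l', rfl⟩ := mem_Dsucc_head hl
            rw [Wl_cons_cons]
          rw [Finset.sum_congr rfl this, ← Finset.mul_sum, ih hy0]
      rw [Finset.sum_congr rfl hterm]
      -- sum over nbhd = tail term + children terms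
      have hnotmem : v.tail ∉ Finset.image (fun i : Fin b => i :: v) Finset.univ := by
        simp only [Finset.mem_image]
        rintro ⟨i, -, hcontra⟩
        have h1 := congrArg List.length hcontra
        simp [List.length_tail] at h1
        omega
      rw [nbhd, Finset.sum_insert hnotmem,
        Finset.sum_image (by intro a _ a' _ h; simpa using h)]
  termination_by t

/-! ### Cylinders and measure -/

lemma getD_cons_pred (a : Vertex b) (L : List (Vertex b)) {j : ℕ} (hj : 1 ≤ j) :
    (a :: L).getD j ([] : Vertex b) = L.getD (j-1) ([] : Vertex b) := by
  have h : j = (j-1) + 1 := by omega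
  conv_lhs => rw [h, List.getD_cons_succ]

/-- the cylinder determined by a finite path. -/
def cylSet (m : List (Vertex b)) : Set (ℕ → Vertex b) :=
  {f | ∀ k, k < m.length → f k = m.getD k ([] : Vertex b)}

lemma cylSet_measurable (m : List (Vertex b)) : MeasurableSet (cylSet m) := by
  have h : cylSet m = ⋂ k ∈ Finset.range m.length,
      (fun f : ℕ → Vertex b => f k) ⁻¹' {m.getD k ([] : Vertex b)} := by
    ext f
    simp [cylSet, Set.mem_iInter]
  rw [h]
  exact MeasurableSet.biInter (Finset.range m.length).countable_toSet
    (fun k _ => (measurable_pi_apply k) trivial)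

lemma Wl_eq_prod (m : List (Vertex b)) :
    Wl E m = ∏ k ∈ Finset.range (m.length - 1),
      E (m.getD k ([] : Vertex b)) (m.getD (k+1) ([] : Vertex b)) := by
  match m with
  | [] => simp [Wl_nil]
  | [v] => simp [Wl_single]
  | x :: y :: l =>
    rw [Wl_cons_cons, Wl_eq_prod (y :: l)]
    have hlen : (x :: y :: l).length - 1 = ((y :: l).length - 1) + 1 := by simp
    rw [hlen, Finset.prod_range_succ']
    simp only [List.getD_cons_succ, List.getD_cons_zero]
    ring

variable (E n)

/-- the family of all first-hit paths from the root within `t` steps. -/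
def Tfam (t : ℕ) : Finset (List (Vertex b)) :=
  Finset.univ.biUnion
    (fun i : Fin b => (Dsucc n t ([i] : Vertex b)).image (List.cons ([] : Vertex b)))

variable {E n}

lemma Tfam_spec {t : ℕ} {m : List (Vertex b)} (hm : m ∈ Tfam n t) :
    ∃ (i : Fin b) (l : List (Vertex b)), m = ([] : Vertex b) :: l ∧ l ∈ Dsucc n t ([i] : Vertex b) := by
  simp only [Tfam, Finset.mem_biUnion, Finset.mem_image] at hm
  obtain ⟨i, _, l, hl, rfl⟩ := hm
  exact ⟨i, l, rfl, hl⟩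

lemma Dsucc_getD_last_level {t : ℕ} {v : Vertex b} {l : List (Vertex b)}
    (hl : l ∈ Dsucc n t v) (hne : l ≠ []) :
    (l.getD (l.length - 1) ([] : Vertex b)).length = n := by
  have hpos : 1 ≤ l.length := by
    cases l with
    | nil => exact absurd rfl hne
    | cons a m => simp
  rw [List.getD_eq_getElem _ _ (by omega)]
  have hlast := mem_Dsucc_getLast hl hne
  rwa [List.getLast_eq_getElem] at hlast

lemma cyl_subset_rho {t : ℕ} {v : Vertex b} (hv : v ≠ ([] : Vertex b)) {l : List (Vertex b)}
    (hl : l ∈ Dsucc n t v) :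
    cylSet (([] : Vertex b) :: l) ⊆ rhoEvent b n := by
  intro f hf
  have hlne : l ≠ [] := by
    obtain ⟨l', rfl⟩ := mem_Dsucc_head hl
    simp
  have hpos : 1 ≤ l.length := by
    cases l with
    | nil => exact absurd rfl hlne
    | cons a m => simp
  refine ⟨l.length, hpos, ?_, ?_⟩
  · have hidx : l.length < (([] : Vertex b) :: l).length := by simp
    rw [hf l.length hidx, getD_cons_pred _ _ hpos]
    exact Dsucc_getD_last_level hl hlne
  · intro j hj1 hjL
    have hidx : j < (([] : Vertex b) :: l).length := by simp; omega
    rw [hf j hidx, getD_cons_pred _ _ hj1, List.getD_eq_getElem _ _ (by omega)]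
    exact mem_Dsucc_ne_nil hv hl _ (List.getElem_mem _)

lemma cyl_disjoint_of_lt {m m' : List (Vertex b)} {t : ℕ}
    (hm : m ∈ Tfam n t) (hm' : m' ∈ Tfam n t) (hlen : m.length < m'.length) :
    Disjoint (cylSet m) (cylSet m') := by
  rw [Set.disjoint_left]
  intro f hfm hfm'
  obtain ⟨i, l, rfl, hl⟩ := Tfam_spec hm
  obtain ⟨i', l', rfl, hl'⟩ := Tfam_spec hm'
  have hlne : l ≠ [] := by
    obtain ⟨l2, rfl⟩ := mem_Dsucc_head hl; simp
  have hl'ne : l' ≠ [] := by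
    obtain ⟨l2, rfl⟩ := mem_Dsucc_head hl'; simp
  have hpos : 1 ≤ l.length := by
    cases l with
    | nil => exact absurd rfl hlne
    | cons a mm => simp
  simp only [List.length_cons] at hlen
  have h1 : f l.length = (([] : Vertex b) :: l).getD l.length ([] : Vertex b) :=
    hfm _ (by simp)
  have h2 : f l.length = (([] : Vertex b) :: l').getD l.length ([] : Vertex b) :=
    hfm' _ (by simp; omega)
  have hlev : ((([] : Vertex b) :: l).getD l.length ([] : Vertex b)).length = n := by
    rw [getD_cons_pred _ _ hpos]
    exact Dsucc_getD_last_level hl hlne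
  have hint : ((([] : Vertex b) :: l').getD l.length ([] : Vertex b)).length ≠ n := by
    rw [getD_cons_pred _ _ hpos, List.getD_eq_getElem _ _ (by omega)]
    exact mem_Dsucc_interior hl' (l.length - 1) (by omega)
  rw [← h1, h2] at hlev
  exact hint hlev

lemma cyl_pairwise_disjoint {t : ℕ} :
    (↑(Tfam (b := b) n t) : Set (List (Vertex b))).PairwiseDisjoint (fun m => cylSet m) := by
  intro m hm m' hm' hne
  simp only [Finset.mem_coe] at hm hm'
  rcases lt_trichotomy m.length m'.length with h | h | h
  · exact cyl_disjoint_of_lt hm hm' h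
  · show Disjoint (cylSet m) (cylSet m')
    rw [Set.disjoint_left]
    intro f hfm hfm'
    apply hne
    refine List.ext_getElem h ?_
    intro k hk hk'
    have e1 := hfm k hk
    have e2 := hfm' k hk'
    rw [List.getD_eq_getElem _ _ hk] at e1
    rw [List.getD_eq_getElem _ _ hk'] at e2
    rw [← e1, ← e2]
  · exact (cyl_disjoint_of_lt hm' hm h).symm

include hnn in
lemma Tfam_sum (hn : 1 ≤ n) (t : ℕ) :
    ∑ m ∈ Tfam n t, Wl E m
      = ∑ i : Fin b, E ([] : Vertex b) ([i]) * Ssucc E n t ([i] : Vertex b) := by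
  rw [Tfam, Finset.sum_biUnion ?hdisj]
  case hdisj =>
    intro i hi i' hi' hne
    simp only [Function.onFun, Finset.disjoint_left]
    intro m hm hm'
    simp only [Finset.mem_image] at hm hm'
    obtain ⟨l1, hl1, rfl⟩ := hm
    obtain ⟨l2, hl2, heq⟩ := hm'
    obtain ⟨l1', rfl⟩ := mem_Dsucc_head hl1
    obtain ⟨l2', rfl⟩ := mem_Dsucc_head hl2
    apply hne
    have hgd := congrArg (fun l => l.getD 1 ([] : Vertex b)) heq
    simp at hgd
    have h2 : ([i] : Vertex b) = [i'] := by simpa using hgd.symm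
    simpa using h2
  refine Finset.sum_congr rfl ?_
  intro i _
  rw [Finset.sum_image (by intro a _ a' _ h; exact (List.cons_injective) h)]
  have hW : ∀ l ∈ Dsucc n t ([i] : Vertex b),
      Wl E (([] : Vertex b) :: l) = E ([] : Vertex b) ([i]) * Wl E l := by
    intro l hl
    obtain ⟨l', rfl⟩ := mem_Dsucc_head hl
    rw [Wl_cons_cons]
  rw [Finset.sum_congr rfl hW, ← Finset.mul_sum, Dsucc_sum hnn hn (by simp)]

section MeasurePart
open MeasureTheory Filter

variable {μ : MeasureTheory.Measure (ℕ → Vertex b)}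
variable (hμcyl : ∀ (N : ℕ) (x : ℕ → Vertex b),
    μ {f | ∀ k ≤ N, f k = x k}
      = ENNReal.ofReal ((if x 0 = ([] : Vertex b) then (1:ℝ) else 0)
          * ∏ k ∈ Finset.range N, E (x k) (x (k+1))))

include hμcyl in
lemma cyl_measure {m : List (Vertex b)} (hm : m ≠ [])
    (hm0 : m.getD 0 ([] : Vertex b) = ([] : Vertex b)) :
    μ (cylSet m) = ENNReal.ofReal (Wl E m) := by
  have hpos : 1 ≤ m.length := by
    cases m with
    | nil => exact absurd rfl hm
    | cons a l => simp
  have hset : cylSet m = {f : ℕ → Vertex b | ∀ k ≤ m.length - 1, f k = m.getD k ([] : Vertex b)} := by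
    ext f
    constructor
    · intro h k hk; exact h k (by omega)
    · intro h k hk; exact h k (by omega)
  rw [hset, hμcyl (m.length - 1) (fun k => m.getD k ([] : Vertex b))]
  rw [Wl_eq_prod]
  congr 1
  have hm0' : m[0]?.getD ([] : Vertex b) = ([] : Vertex b) := by
    rw [← List.getD_eq_getElem?_getD]
    exact hm0
  simp [hm0']

include hnn hμcyl in
lemma measure_rho_ge (hn : 1 ≤ n) (t : ℕ) :
    ENNReal.ofReal (∑ i : Fin b, E ([] : Vertex b) ([i]) * Ssucc E n t ([i] : Vertex b))
      ≤ μ (rhoEvent b n) := by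
  rw [← Tfam_sum hnn hn t, ENNReal.ofReal_sum_of_nonneg (fun m _ => Wl_nonneg hnn m)]
  calc ∑ m ∈ Tfam n t, ENNReal.ofReal (Wl E m)
      = ∑ m ∈ Tfam n t, μ (cylSet m) := by
        refine Finset.sum_congr rfl fun m hm => ?_
        obtain ⟨i, l, rfl, hl⟩ := Tfam_spec hm
        rw [cyl_measure hμcyl (by simp) (by simp)]
    _ = μ (⋃ m ∈ Tfam n t, cylSet m) :=
        (measure_biUnion_finset cyl_pairwise_disjoint (fun m _ => cylSet_measurable m)).symm
    _ ≤ μ (rhoEvent b n) := by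
        refine measure_mono ?_
        intro f hf
        simp only [Set.mem_iUnion] at hf
        obtain ⟨m, hm, hfm⟩ := hf
        obtain ⟨i, l, rfl, hl⟩ := Tfam_spec hm
        exact cyl_subset_rho (by simp) hl hfm

include hε hε1 hnn hsum hellc hellt hμcyl in
lemma main_bound (hb : 0 < b) (hn : 1 ≤ n) {r : Vertex b} (hrn : r.length = n)
    (hroot : ∑ i : Fin b, E ([] : Vertex b) ([i]) = 1)
    [MeasureTheory.IsProbabilityMeasure μ] :
    ε * sfun E r 1 ≤ (μ (rhoEvent b n)).toReal := by
  have hr1 : 1 ≤ r.length := by omega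
  set δ : ℝ := 1 - ε ^ (n - 1) with hδ
  have hεp : 0 < ε ^ (n-1) := pow_pos hε _
  have hεp1 : ε ^ (n-1) ≤ 1 := pow_le_one₀ (le_of_lt hε) hε1
  have hδ0 : 0 ≤ δ := by rw [hδ]; linarith
  have hδ1 : δ < 1 := by rw [hδ]; linarith
  have hz1len : (zv r 1).length = 1 := zv_length hr1
  obtain ⟨i1, hi1⟩ := List.length_eq_one_iff.mp hz1len
  have hE1 : ε ≤ E ([] : Vertex b) ([i1]) := hellc ([] : Vertex b) i1
  have hE1le : E ([] : Vertex b) ([i1]) ≤ 1 := by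
    rw [← hroot]
    exact Finset.single_le_sum (f := fun i : Fin b => E ([] : Vertex b) ([i]))
      (fun i _ => hnn _ _) (Finset.mem_univ i1)
  have hs1 : 0 ≤ sfun E r 1 := sfun_nonneg hε hnn hellc hellt hr1 1
  have key : ∀ m : ℕ, ε * sfun E r 1 - δ ^ m ≤ (μ (rhoEvent b n)).toReal := by
    intro m
    set t := m * (n - 1) with ht
    have hsum_le := measure_rho_ge hnn hμcyl hn t
    have htoReal : (∑ i : Fin b, E ([] : Vertex b) ([i]) * Ssucc E n t ([i] : Vertex b))
        ≤ (μ (rhoEvent b n)).toReal :=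
      (ENNReal.ofReal_le_iff_le_toReal (MeasureTheory.measure_ne_top μ _)).mp hsum_le
    refine le_trans ?_ htoReal
    have hterm : E ([] : Vertex b) ([i1]) * Ssucc E n t ([i1] : Vertex b)
        ≤ ∑ i : Fin b, E ([] : Vertex b) ([i]) * Ssucc E n t ([i] : Vertex b) :=
      Finset.single_le_sum
        (f := fun i : Fin b => E ([] : Vertex b) ([i]) * Ssucc E n t ([i] : Vertex b))
        (fun i _ => mul_nonneg (hnn _ _) (Ssucc_nonneg hnn t _)) (Finset.mem_univ i1)
    refine le_trans ?_ hterm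
    have hcomp : uf E r ([i1] : Vertex b)
        ≤ Ssucc E n t ([i1] : Vertex b) + Aalive E n t ([i1] : Vertex b) :=
      uf_le_Ssucc_add hε hnn hsum hellc hellt hrn hn t ([i1] : Vertex b) (by simp; omega)
    have hgeo : Aalive E n t ([i1] : Vertex b) ≤ δ ^ m := by
      rw [ht]
      exact Aalive_geo hε hε1 hnn hsum hellc hellt hb hn m _ (by simp; omega)
    have huf : sfun E r 1 ≤ uf E r ([i1] : Vertex b) := by
      refine sfun_rayK_le_uf hε hnn hellc hellt hr1 hr1 _ ?_
      rw [hi1]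
    have hSS : sfun E r 1 - δ ^ m ≤ Ssucc E n t ([i1] : Vertex b) := by linarith
    have hd : (0:ℝ) ≤ δ ^ m := pow_nonneg hδ0 m
    have h1 : ε * sfun E r 1 - δ ^ m ≤ E ([] : Vertex b) ([i1]) * (sfun E r 1 - δ ^ m) := by
      nlinarith [mul_nonneg (sub_nonneg.mpr hE1) hs1,
        mul_nonneg (sub_nonneg.mpr hE1le) hd]
    have h2 : E ([] : Vertex b) ([i1]) * (sfun E r 1 - δ ^ m)
        ≤ E ([] : Vertex b) ([i1]) * Ssucc E n t ([i1] : Vertex b) :=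
      mul_le_mul_of_nonneg_left hSS (hnn _ _)
    linarith
  have hlim : Filter.Tendsto (fun m : ℕ => ε * sfun E r 1 - δ ^ m) Filter.atTop
      (nhds (ε * sfun E r 1 - 0)) :=
    Filter.Tendsto.sub tendsto_const_nhds (tendsto_pow_atTop_nhds_zero_of_lt_one hδ0 hδ1)
  have := le_of_tendsto hlim (Filter.Eventually.of_forall key)
  simpa using this

end MeasurePart

end Aux

section SetupPart
open MeasureTheory Filter

variable {b : ℕ} {Ω : Type*} [MeasurableSpace Ω] {P : Measure Ω}

lemma Setup.eps_le_one (S : Setup b Ω P) (hb : 1 ≤ b) (ω : Ω) : S.ε0 ≤ 1 := by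
  have hroot := S.env_sum_root ω
  have hterm : ∀ i ∈ Finset.univ, S.ε0 ≤ S.env ω ([] : Vertex b) ([i]) := by
    intro i _
    exact S.env_elliptic ω ([] : Vertex b) ([i]) (Or.inl ⟨i, rfl⟩)
  have hcard := Finset.card_nsmul_le_sum Finset.univ
    (fun i : Fin b => S.env ω ([] : Vertex b) ([i])) S.ε0 hterm
  rw [hroot] at hcard
  simp only [Finset.card_univ, Fintype.card_fin, nsmul_eq_mul] at hcard
  have hb' : (1:ℝ) ≤ (b:ℝ) := by exact_mod_cast hb
  nlinarith [S.ε0_pos]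

lemma Setup.env_facts (S : Setup b Ω P) (ω : Ω) :
    (∀ v y : Vertex b, 0 ≤ S.env ω v y)
    ∧ (∀ v : Vertex b, v ≠ [] → S.env ω v v.tail + ∑ i : Fin b, S.env ω v (i :: v) = 1)
    ∧ (∀ (v : Vertex b) (i : Fin b), S.ε0 ≤ S.env ω v (i :: v))
    ∧ (∀ v : Vertex b, v ≠ [] → S.ε0 ≤ S.env ω v v.tail) := by
  refine ⟨S.env_nonneg ω, S.env_sum ω, ?_, ?_⟩
  · intro v i
    exact S.env_elliptic ω v (i :: v) (Or.inl ⟨i, rfl⟩)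
  · intro v hv
    refine S.env_elliptic ω v v.tail (Or.inr ⟨v.head hv, ?_⟩)
    exact (List.cons_head_tail hv).symm

lemma Setup.rho_ray (S : Setup b Ω P) (hb : 2 ≤ b) (ω : Ω) {n : ℕ} (hn : 1 ≤ n)
    {r : Vertex b} (hrn : r.length = n) :
    S.ε0 * sfun (S.env ω) r 1 ≤ S.rho ω n := by
  obtain ⟨hnn, hsum, hellc, hellt⟩ := S.env_facts ω
  haveI := S.Pw_prob ω ([] : Vertex b)
  exact main_bound S.ε0_pos (S.eps_le_one (by omega) ω) hnn hsum hellc hellt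
    (fun N x => S.Pw_cyl ω ([] : Vertex b) N x) (by omega) hn hrn (S.env_sum_root ω)

lemma Setup.A_pos_of_ne_nil (S : Setup b Ω P) (ω : Ω) {v : Vertex b} (hv : v ≠ []) :
    0 < S.A ω v :=
  lt_of_lt_of_le S.ε0_pos (S.A_bdd ω v hv).1

lemma Setup.zv_ne_nil (S : Setup b Ω P) {r : Vertex b} {m : ℕ} (hm1 : 1 ≤ m)
    (hm : m ≤ r.length) : zv r m ≠ ([] : Vertex b) := by
  intro h
  have := zv_length (r := r) (k := m) hm
  rw [h] at this
  simp at this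
  omega

lemma Setup.V_zv_succ (S : Setup b Ω P) (ω : Ω) {r : Vertex b} {j : ℕ}
    (hj : j + 2 ≤ r.length) :
    S.V ω (zv r (j+2)) = S.V ω (zv r (j+1)) - Real.log (S.A ω (zv r (j+2))) := by
  unfold Setup.V
  have hlen2 : (zv r (j+2)).length = j + 2 := zv_length (by omega)
  have hlen1 : (zv r (j+1)).length = j + 1 := zv_length (by omega)
  rw [hlen2, hlen1, Finset.sum_range_succ']
  have hdrop0 : (zv r (j+2)).drop 0 = zv r (j+2) := by simp
  have hdrop : ∀ k : ℕ, (zv r (j+2)).drop (k+1) = (zv r (j+1)).drop k := by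
    intro k
    unfold zv
    rw [List.drop_drop, List.drop_drop]
    congr 1
    omega
  rw [hdrop0]
  rw [Finset.sum_congr rfl fun k _ => by rw [hdrop k]]
  ring

lemma Setup.rhoRatio_eq (S : Setup b Ω P) (ω : Ω) {r : Vertex b} :
    ∀ (j : ℕ), j + 1 ≤ r.length →
      rhoRatio (S.env ω) r j = S.A ω (zv r 1) * Real.exp (S.V ω (zv r (j+1))) := by
  obtain ⟨hnn, hsum, hellc, hellt⟩ := S.env_facts ω
  intro j
  induction j with
  | zero =>
    intro hj
    have hz1 : zv r 1 ≠ ([] : Vertex b) := S.zv_ne_nil le_rfl (by omega)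
    have hApos : 0 < S.A ω (zv r 1) := S.A_pos_of_ne_nil ω hz1
    have hV1 : S.V ω (zv r 1) = - Real.log (S.A ω (zv r 1)) := by
      unfold Setup.V
      rw [zv_length (by omega)]
      simp
    rw [hV1, Real.exp_neg, Real.exp_log hApos]
    rw [rhoRatio, Finset.prod_range_zero]
    exact (mul_inv_cancel₀ (ne_of_gt hApos)).symm
  | succ j ih =>
    intro hj
    have hj' : j + 1 ≤ r.length := by omega
    have hz : zv r (j+1) ≠ ([] : Vertex b) := S.zv_ne_nil (by omega) (by omega)
    have hz2 : zv r (j+2) ≠ ([] : Vertex b) := S.zv_ne_nil (by omega) (by omega)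
    have hApos2 : 0 < S.A ω (zv r (j+2)) := S.A_pos_of_ne_nil ω hz2
    -- the quotient identity
    have hcons : zv r (j+2) = (r[r.length - (j+1) - 1]'(by omega)) :: zv r (j+1) := by
      have := zv_succ (r := r) (k := j+1) (by omega)
      exact this
    have htl : (zv r (j+1)).tail = zv r j := by
      rw [zv_tail (by omega) (by omega)]
      norm_num
    have hAdef : S.A ω (zv r (j+2))
        = S.env ω (zv r (j+1)) (zv r (j+2)) / S.env ω (zv r (j+1)) (zv r j) := by
      rw [hcons, S.A_def ω _ _ hz, ← hcons, htl]
    have hppos : 0 < S.env ω (zv r (j+1)) (zv r (j+2)) := by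
      rw [hcons]
      exact lt_of_lt_of_le S.ε0_pos (hellc _ _)
    have hqpos : 0 < S.env ω (zv r (j+1)) (zv r j) := by
      rw [← htl]
      exact lt_of_lt_of_le S.ε0_pos (hellt _ hz)
    have hstep : rhoRatio (S.env ω) r (j+1)
        = rhoRatio (S.env ω) r j
          * (S.env ω (zv r (j+1)) (zv r j) / S.env ω (zv r (j+1)) (zv r (j+2))) := by
      rw [rhoRatio, Finset.prod_range_succ, ← rhoRatio]
    have hinv : S.env ω (zv r (j+1)) (zv r j) / S.env ω (zv r (j+1)) (zv r (j+2))
        = (S.A ω (zv r (j+2)))⁻¹ := by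
      rw [hAdef]
      rw [inv_div]
    have hVs : S.V ω (zv r (j+2)) = S.V ω (zv r (j+1)) - Real.log (S.A ω (zv r (j+2))) :=
      S.V_zv_succ ω (by omega)
    rw [hstep, ih hj', hinv, hVs, Real.exp_sub, Real.exp_log hApos2]
    field_simp

lemma Setup.sfun_one_bound (S : Setup b Ω P) (ω : Ω) {n : ℕ} (hn : 1 ≤ n)
    {r : Vertex b} (hrn : r.length = n) :
    S.ε0 * Real.exp (- S.Vbar ω r) / n ≤ sfun (S.env ω) r 1 := by
  obtain ⟨hnn, hsum, hellc, hellt⟩ := S.env_facts ω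
  have hε := S.ε0_pos
  have hr1 : 1 ≤ r.length := by omega
  set Z := ∑ j ∈ Finset.range r.length, rhoRatio (S.env ω) r j with hZ
  have hZpos : 0 < Z := Zpos hε hnn hellc hellt hr1
  have hrr0 : rhoRatio (S.env ω) r 0 = 1 := by simp [rhoRatio]
  have hsfun : sfun (S.env ω) r 1 = 1 / Z := by
    unfold sfun
    rw [Finset.sum_range_one, hrr0]
  -- bound each term
  have hterm : ∀ j ∈ Finset.range r.length,
      rhoRatio (S.env ω) r j ≤ Real.exp (S.Vbar ω r) / S.ε0 := by
    intro j hjm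
    rw [Finset.mem_range] at hjm
    rw [S.rhoRatio_eq ω j (by omega)]
    have hz1 : zv r 1 ≠ ([] : Vertex b) := S.zv_ne_nil le_rfl (by omega)
    have hA1 : S.A ω (zv r 1) ≤ 1 / S.ε0 := (S.A_bdd ω _ hz1).2
    have hA1pos : 0 < S.A ω (zv r 1) := S.A_pos_of_ne_nil ω hz1
    have hVle : S.V ω (zv r (j+1)) ≤ S.Vbar ω r := by
      unfold Setup.Vbar
      have hidx : r.length - (j+1) < r.length := by omega
      have heq : S.V ω (zv r (j+1)) = S.V ω (r.drop ((⟨r.length - (j+1), hidx⟩ : Fin r.length) : ℕ)) := rfl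
      rw [heq]
      exact le_ciSup (f := fun k : Fin r.length => S.V ω (r.drop (k : ℕ)))
        (Set.Finite.bddAbove (Set.finite_range _)) ⟨r.length - (j+1), hidx⟩
    have hexp : Real.exp (S.V ω (zv r (j+1))) ≤ Real.exp (S.Vbar ω r) :=
      Real.exp_le_exp.mpr hVle
    calc S.A ω (zv r 1) * Real.exp (S.V ω (zv r (j+1)))
        ≤ (1 / S.ε0) * Real.exp (S.Vbar ω r) := by
          exact mul_le_mul hA1 hexp (le_of_lt (Real.exp_pos _)) (by positivity)
      _ = Real.exp (S.Vbar ω r) / S.ε0 := by ring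
  have hZle : Z ≤ n * (Real.exp (S.Vbar ω r) / S.ε0) := by
    calc Z ≤ ∑ _j ∈ Finset.range r.length, Real.exp (S.Vbar ω r) / S.ε0 :=
        Finset.sum_le_sum hterm
      _ = n * (Real.exp (S.Vbar ω r) / S.ε0) := by
          rw [Finset.sum_const, Finset.card_range, hrn, nsmul_eq_mul]
  rw [hsfun]
  have hnpos : (0:ℝ) < n := by exact_mod_cast hn
  rw [div_le_div_iff₀ hnpos hZpos]
  calc S.ε0 * Real.exp (-S.Vbar ω r) * Z
      ≤ S.ε0 * Real.exp (-S.Vbar ω r) * (n * (Real.exp (S.Vbar ω r) / S.ε0)) := by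
        have : 0 ≤ S.ε0 * Real.exp (-S.Vbar ω r) := by positivity
        exact mul_le_mul_of_nonneg_left hZle this
    _ = 1 * n := by
        have h1 : S.ε0 ≠ 0 := ne_of_gt S.ε0_pos
        have h2 : Real.exp (S.Vbar ω r) ≠ 0 := ne_of_gt (Real.exp_pos _)
        rw [Real.exp_neg]
        field_simp
  

end SetupPart

/-- Proposition 2.5 of Hu–Shi: if the walk is recurrent, there is a constant `c₁₀ > 0`
such that for every `n ≥ 1`, `ϱ_n ≥ (c₁₀/n) exp(-min_{x∈𝕋_n} V̄(x))`. -/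
theorem rho_lower_bound {b : ℕ} (hb : 2 ≤ b) {Ω : Type*} [MeasurableSpace Ω]
    (P : Measure Ω) [IsProbabilityMeasure P] (S : Setup b Ω P)
    (hrec : S.Recurrent) :
    ∃ c₁₀ : ℝ, 0 < c₁₀ ∧
      ∀ᵐ ω ∂P, ∀ n : ℕ, 1 ≤ n →
        c₁₀ / n * Real.exp (-S.minVbar ω n) ≤ S.rho ω n := by
  refine ⟨S.ε0 ^ 2, pow_pos S.ε0_pos 2, ?_⟩
  refine Filter.Eventually.of_forall ?_
  intro ω n hn
  have hne : Nonempty (Fin n → Fin b) := ⟨fun _ => ⟨0, by omega⟩⟩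
  obtain ⟨g₀, hg₀⟩ := Finite.exists_min (fun g : Fin n → Fin b => S.Vbar ω (List.ofFn g))
  have hrn : (List.ofFn g₀).length = n := by simp
  have h1 := S.rho_ray hb ω hn hrn
  have h2 := S.sfun_one_bound ω hn hrn
  have h3 : S.Vbar ω (List.ofFn g₀) ≤ S.minVbar ω n := le_ciInf hg₀
  have hexp : Real.exp (- S.minVbar ω n) ≤ Real.exp (- S.Vbar ω (List.ofFn g₀)) :=
    Real.exp_le_exp.mpr (by linarith)
  have hnpos : (0:ℝ) < n := by exact_mod_cast hn
  calc S.ε0 ^ 2 / n * Real.exp (-S.minVbar ω n)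
      ≤ S.ε0 ^ 2 / n * Real.exp (-S.Vbar ω (List.ofFn g₀)) :=
        mul_le_mul_of_nonneg_left hexp (by positivity)
    _ = S.ε0 * (S.ε0 * Real.exp (-S.Vbar ω (List.ofFn g₀)) / n) := by ring
    _ ≤ S.ε0 * sfun (S.env ω) (List.ofFn g₀) 1 :=
        mul_le_mul_of_nonneg_left h2 (le_of_lt S.ε0_pos)
    _ ≤ S.rho ω n := h1

end RWRE
end
end

section
/- For any finite collection of nonnegative random variables η₀, η₁, …, η_n (on a common probability space) and any λ ≥ 0, ∏_{j=0}^{n} 𝐄(e^{−η_j}) ≤ e^{−λ} + ∏_{j=0}^{n} 𝐏{η_j < λ}. -/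
open MeasureTheory

lemma prod_convex_aux {ι : Type*} (s : Finset ι) (p : ι → ℝ) (ε : ℝ)
    (hε0 : 0 ≤ ε) (hε1 : ε ≤ 1) (hp : ∀ j ∈ s, 0 ≤ p j ∧ p j ≤ 1) :
    ∏ j ∈ s, (ε + (1 - ε) * p j) ≤ ε + (1 - ε) * ∏ j ∈ s, p j := by
  classical
  induction s using Finset.induction_on with
  | empty => simp
  | @insert a s ha ih =>
    have hpa := hp a (Finset.mem_insert_self a s)
    have hps : ∀ j ∈ s, 0 ≤ p j ∧ p j ≤ 1 := fun j hj =>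
      hp j (Finset.mem_insert_of_mem hj)
    have hQ0 : 0 ≤ ∏ j ∈ s, p j := Finset.prod_nonneg fun j hj => (hps j hj).1
    have hQ1 : ∏ j ∈ s, p j ≤ 1 :=
      Finset.prod_le_one (fun j hj => (hps j hj).1) (fun j hj => (hps j hj).2)
    rw [Finset.prod_insert ha, Finset.prod_insert ha]
    have h1 : (ε + (1 - ε) * p a) * (∏ j ∈ s, (ε + (1 - ε) * p j))
        ≤ (ε + (1 - ε) * p a) * (ε + (1 - ε) * ∏ j ∈ s, p j) := by
      apply mul_le_mul_of_nonneg_left (ih hps)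
      nlinarith [hpa.1]
    refine h1.trans ?_
    nlinarith [hpa.1, hpa.2, mul_nonneg (mul_nonneg hε0 (sub_nonneg.2 hε1))
      (mul_nonneg (sub_nonneg.2 hpa.2) (sub_nonneg.2 hQ1))]

/-- For any nonnegative random variables `η₀, …, η_n` and any `λ ≥ 0`,
`∏ⱼ 𝐄(e^{-ηⱼ}) ≤ e^{-λ} + ∏ⱼ 𝐏{ηⱼ < λ}` (Section 5 of Hu–Shi). -/
theorem prod_laplace_le {Ω : Type*} [MeasurableSpace Ω] (P : Measure Ω)
    [IsProbabilityMeasure P] (n : ℕ) (η : Fin (n + 1) → Ω → ℝ)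
    (hmeas : ∀ j, Measurable (η j)) (hnonneg : ∀ j ω, 0 ≤ η j ω)
    (lam : ℝ) (hlam : 0 ≤ lam) :
    (∏ j : Fin (n + 1), ∫ ω, Real.exp (-η j ω) ∂P)
      ≤ Real.exp (-lam) + ∏ j : Fin (n + 1), (P {ω | η j ω < lam}).toReal := by
  set ε := Real.exp (-lam) with hε
  have hε0 : 0 ≤ ε := (Real.exp_pos _).le
  have hε1 : ε ≤ 1 := Real.exp_le_one_iff.2 (by linarith)
  set p : Fin (n + 1) → ℝ := fun j => (P {ω | η j ω < lam}).toReal with hpdef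
  have hAmeas : ∀ j, MeasurableSet {ω | η j ω < lam} := fun j =>
    measurableSet_lt (hmeas j) measurable_const
  have hp01 : ∀ j, 0 ≤ p j ∧ p j ≤ 1 := fun j =>
    ⟨ENNReal.toReal_nonneg, by
      have := prob_le_one (μ := P) (s := {ω | η j ω < lam})
      simpa [p] using ENNReal.toReal_mono ENNReal.one_ne_top this⟩
  -- each factor bound
  have key : ∀ j, (∫ ω, Real.exp (-η j ω) ∂P) ≤ ε + (1 - ε) * p j := by
    intro j
    have hint1 : Integrable (fun ω => Real.exp (-η j ω)) P := by
      refine Integrable.mono' (integrable_const 1) ?_ ?_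
      · exact ((hmeas j).neg.exp).aestronglyMeasurable
      · refine Filter.Eventually.of_forall fun ω => ?_
        rw [Real.norm_eq_abs, abs_of_pos (Real.exp_pos _)]
        exact Real.exp_le_one_iff.2 (by simpa using hnonneg j ω)
    have hint2 : Integrable
        (fun ω => ({ω | η j ω < lam}).indicator (fun _ => (1 - ε)) ω + ε) P := by
      exact ((integrable_const (1 - ε)).indicator (hAmeas j)).add (integrable_const ε)
    have hle : ∀ ω, Real.exp (-η j ω)
        ≤ ({ω | η j ω < lam}).indicator (fun _ => (1 - ε)) ω + ε := by
      intro ω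
      by_cases h : η j ω < lam
      · have : ({ω | η j ω < lam}).indicator (fun _ => (1 - ε)) ω = 1 - ε :=
          Set.indicator_of_mem (show ω ∈ {ω | η j ω < lam} from h) _
        rw [this]
        have : Real.exp (-η j ω) ≤ 1 := Real.exp_le_one_iff.2 (by simpa using hnonneg j ω)
        linarith
      · have : ({ω | η j ω < lam}).indicator (fun _ => (1 - ε)) ω = 0 :=
          Set.indicator_of_notMem (show ω ∉ {ω | η j ω < lam} from h) _
        rw [this, zero_add, hε]
        exact Real.exp_le_exp.2 (by simp only [neg_le_neg_iff]; linarith [not_lt.1 h])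
    calc (∫ ω, Real.exp (-η j ω) ∂P)
        ≤ ∫ ω, (({ω | η j ω < lam}).indicator (fun _ => (1 - ε)) ω + ε) ∂P :=
          integral_mono hint1 hint2 hle
      _ = (1 - ε) * p j + ε := by
          rw [integral_add ((integrable_const (1 - ε)).indicator (hAmeas j))
            (integrable_const ε), integral_indicator_const _ (hAmeas j),
            integral_const]
          simp [p, smul_eq_mul, mul_comm, Measure.real]
      _ = ε + (1 - ε) * p j := by ring
  have hprod : (∏ j : Fin (n + 1), ∫ ω, Real.exp (-η j ω) ∂P)
      ≤ ∏ j : Fin (n + 1), (ε + (1 - ε) * p j) := by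
    apply Finset.prod_le_prod
    · intro j _
      exact integral_nonneg fun ω => (Real.exp_pos _).le
    · intro j _
      exact key j
  have halg := prod_convex_aux Finset.univ p ε hε0 hε1 (fun j _ => hp01 j)
  have hQ0 : 0 ≤ ∏ j : Fin (n + 1), p j := Finset.prod_nonneg fun j _ => (hp01 j).1
  calc (∏ j : Fin (n + 1), ∫ ω, Real.exp (-η j ω) ∂P)
      ≤ ∏ j : Fin (n + 1), (ε + (1 - ε) * p j) := hprod
    _ ≤ ε + (1 - ε) * ∏ j : Fin (n + 1), p j := halg
    _ ≤ ε + ∏ j : Fin (n + 1), p j := by nlinarith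
end
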